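/- If G is a 2-connected graph of order n with fewer than 2n-3 edges, then, for every vertex u of G, there is an independent cut S of G with u not in S. -/

import Mathlib

/-- `S` is a vertex cut of `G`: some two vertices outside of `S` lie in
different connected components of `G - S`. -/
def IsVertexCut {V : Type*} (G : SimpleGraph V) (S : Set V) : Prop :=
  ∃ a b : ↥(Sᶜ), ¬ (G.induce Sᶜ).Reachable a b

/-- An independent cut is a vertex cut that is an independent set. -/
def IsIndependentCut {V : Type*} (G : SimpleGraph V) (S : Set V) : Prop :=
  IsVertexCut G S ∧ ∀ a ∈ S, ∀ b ∈ S, ¬ G.Adj a b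

/-- A graph is `k`-connected if it has more than `k` vertices and deleting any set of
fewer than `k` vertices leaves a connected graph. -/
def KConnected {V : Type*} [Fintype V] (k : ℕ) (G : SimpleGraph V) : Prop :=
  k < Fintype.card V ∧ ∀ S : Finset V, S.card < k → (G.induce (↑S : Set V)ᶜ).Connected


namespace IndepCutAux

open Set

variable {V : Type*}

/-- Reachability within a vertex subset `t`. -/
def ReachIn (G : SimpleGraph V) (t : Set V) : V → V → Prop :=
  Relation.ReflTransGen (fun p q => G.Adj p q ∧ p ∈ t ∧ q ∈ t)

/-- `G` restricted to `t` is connected (as a relativized notion). -/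
def ConnOn (G : SimpleGraph V) (t : Set V) : Prop :=
  t.Nonempty ∧ ∀ a ∈ t, ∀ b ∈ t, ReachIn G t a b

/-- Ordered pairs of adjacent vertices inside `s`. -/
def E2 (G : SimpleGraph V) (s : Set V) : Set (V × V) :=
  {p | G.Adj p.1 p.2 ∧ p.1 ∈ s ∧ p.2 ∈ s}

/-- The inductive conclusion: a nonempty `C ⊆ s` avoiding the closed neighbourhood of `u`,
whose neighbourhood is independent. -/
def GoodIn (G : SimpleGraph V) (s : Set V) (u : V) : Prop :=
  ∃ C : Set V, C ⊆ s ∧ C.Nonempty ∧ u ∉ C ∧ (∀ c ∈ C, ¬ G.Adj u c) ∧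
    ∀ a b, a ∈ s → b ∈ s → a ∉ C → b ∉ C →
      (∃ c ∈ C, G.Adj a c) → (∃ c ∈ C, G.Adj b c) → ¬ G.Adj a b

lemma reachIn_symm (G : SimpleGraph V) (t : Set V) : Symmetric (ReachIn G t) :=
  fun a b h => (@Relation.ReflTransGen.stdSymm _ _ ⟨fun _ _ h => ⟨h.1.symm, h.2.2, h.2.1⟩⟩).symm a b h

lemma reachIn_mono {G G' : SimpleGraph V} {t : Set V}
    (h : ∀ a b, a ∈ t → b ∈ t → G.Adj a b → G'.Adj a b) {a b : V}
    (hr : ReachIn G t a b) : ReachIn G' t a b := by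
  induction hr with
  | refl => exact Relation.ReflTransGen.refl
  | tail _ hstep ih =>
      exact ih.tail ⟨h _ _ hstep.2.1 hstep.2.2 hstep.1, hstep.2⟩

lemma connOn_mono {G G' : SimpleGraph V} {t : Set V}
    (h : ∀ a b, a ∈ t → b ∈ t → G.Adj a b → G'.Adj a b)
    (hc : ConnOn G t) : ConnOn G' t :=
  ⟨hc.1, fun a ha b hb => reachIn_mono h (hc.2 a ha b hb)⟩

/-- Truncation: removing a separated part `B` keeps connectivity on the rest. -/
lemma connOn_diff {G : SimpleGraph V} {r B : Set V} {x : V}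
    (hconn : ConnOn G r) (hx : x ∈ r) (hxB : x ∉ B)
    (hsep : ∀ p q, p ∈ B → q ∈ r → q ∉ B → q ≠ x → ¬ G.Adj p q) :
    ConnOn G (r \ B) := by
  have key : ∀ a, ReachIn G r a x → a ∉ B → ReachIn G (r \ B) a x := by
    intro a hrax
    induction hrax using Relation.ReflTransGen.head_induction_on with
    | refl => intro _; exact Relation.ReflTransGen.refl
    | head hstep htail ih =>
      rename_i a' c'
      intro haB
      by_cases hax : a' = x
      · subst hax; exact Relation.ReflTransGen.refl
      by_cases hcB : c' ∈ B
      · exact absurd hstep.1.symm (hsep c' a' hcB hstep.2.1 haB hax)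
      · exact Relation.ReflTransGen.head
          ⟨hstep.1, ⟨hstep.2.1, haB⟩, ⟨hstep.2.2, hcB⟩⟩ (ih hcB)
  refine ⟨⟨x, hx, hxB⟩, ?_⟩
  intro a ha b hb
  exact (key a (hconn.2 a ha.1 x hx) ha.2).trans
    (reachIn_symm _ _ (key b (hconn.2 b hb.1 x hx) hb.2))

/-- A symmetric irreflexive set of ordered pairs has even cardinality. -/
lemma even_ncard_symmPairs [Fintype V] (S : Set (V × V))
    (hsym : ∀ p ∈ S, (p.2, p.1) ∈ S) (hirr : ∀ p ∈ S, p.1 ≠ p.2) :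
    Even S.ncard := by
  classical
  generalize hn : S.ncard = n
  induction n using Nat.strong_induction_on generalizing S with
  | _ n IH =>
    rcases S.eq_empty_or_nonempty with rfl | ⟨p, hp⟩
    · have : n = 0 := by simpa using hn.symm
      simp [this]
    · have hps : (p.2, p.1) ∈ S := hsym p hp
      have hpp : p ≠ (p.2, p.1) := by
        intro h
        exact hirr p hp (by rw [Prod.ext_iff] at h; exact h.1)
      have hsub : ({p, (p.2, p.1)} : Set (V × V)) ⊆ S := by
        intro q hq; rcases hq with rfl | hq
        · exact hp
        · simp only [mem_singleton_iff] at hq; subst hq; exact hps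
      have h2 : ({p, (p.2, p.1)} : Set (V × V)).ncard = 2 := ncard_pair hpp
      have hdiff := ncard_diff_add_ncard_of_subset hsub (toFinite S)
      set T := S \ {p, (p.2, p.1)} with hT
      have hTsym : ∀ q ∈ T, (q.2, q.1) ∈ T := by
        rintro q ⟨hqS, hqn⟩
        refine ⟨hsym q hqS, ?_⟩
        intro hc
        rcases hc with hc | hc
        · apply hqn
          right
          rw [Prod.ext_iff] at hc
          simp only [mem_singleton_iff, Prod.ext_iff]
          exact ⟨hc.2, hc.1⟩
        · apply hqn
          left
          simp only [mem_singleton_iff] at hc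
          rw [Prod.ext_iff] at hc
          rw [Prod.ext_iff]
          exact ⟨hc.2, hc.1⟩
      have hTirr : ∀ q ∈ T, q.1 ≠ q.2 := fun q hq => hirr q hq.1
      have hlt : T.ncard < n := by omega
      have hev := IH T.ncard hlt T hTsym hTirr rfl
      have hev2 : Even (T.ncard + 2) := by
        rcases hev with ⟨k, hk⟩; exact ⟨k + 1, by omega⟩
      rw [hn, h2] at hdiff
      rwa [hdiff] at hev2


/-- The contraction of the edge `ux` onto `u` (with `x` made isolated). -/
def cg (G : SimpleGraph V) (u x : V) : SimpleGraph V where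
  Adj a b := a ≠ b ∧ a ≠ x ∧ b ≠ x ∧
    (G.Adj a b ∨ (a = u ∧ G.Adj x b) ∨ (b = u ∧ G.Adj x a))
  symm := by
    constructor
    rintro a b ⟨h1, h2, h3, h4⟩
    refine ⟨h1.symm, h3, h2, ?_⟩
    rcases h4 with h | ⟨h5, h6⟩ | ⟨h5, h6⟩
    · exact Or.inl h.symm
    · exact Or.inr (Or.inr ⟨h5, h6⟩)
    · exact Or.inr (Or.inl ⟨h5, h6⟩)
  loopless := ⟨fun a h => h.1 rfl⟩

lemma cg_adj {G : SimpleGraph V} {u x a b : V} :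
    (cg G u x).Adj a b ↔ a ≠ b ∧ a ≠ x ∧ b ≠ x ∧
      (G.Adj a b ∨ (a = u ∧ G.Adj x b) ∨ (b = u ∧ G.Adj x a)) := Iff.rfl

lemma cg_count [Fintype V] (G : SimpleGraph V) {s : Set V} {u x y : V}
    (hus : u ∈ s) (hxs : x ∈ s) (hys : y ∈ s)
    (hux : G.Adj u x) (huy : G.Adj u y) (hxy : G.Adj x y) :
    (E2 (cg G u x) (s \ {x})).ncard + 4 ≤ (E2 G s).ncard := by
  classical
  set D := E2 (cg G u x) (s \ {x}) with hD
  set f : V × V → V × V :=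
    fun p => if G.Adj p.1 p.2 then p else if p.1 = u then (x, p.2) else (p.1, x) with hf
  have hfpos : ∀ p : V × V, G.Adj p.1 p.2 → f p = p := by
    intro p h; simp only [hf]; rw [if_pos h]
  have hfneg1 : ∀ p : V × V, ¬ G.Adj p.1 p.2 → p.1 = u → f p = (x, p.2) := by
    intro p h h1; simp only [hf]; rw [if_neg h, if_pos h1]
  have hfneg2 : ∀ p : V × V, ¬ G.Adj p.1 p.2 → p.1 ≠ u → f p = (p.1, x) := by
    intro p h h1; simp only [hf]; rw [if_neg h, if_neg h1]
  set Bad : Set (V × V) := {(u, x), (x, u), (x, y), (y, x)} with hBad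
  have hBadsub : Bad ⊆ E2 G s := by
    rintro q (rfl | rfl | rfl | hq)
    · exact ⟨hux, hus, hxs⟩
    · exact ⟨hux.symm, hxs, hus⟩
    · exact ⟨hxy, hxs, hys⟩
    · simp only [Set.mem_singleton_iff] at hq; subst hq; exact ⟨hxy.symm, hys, hxs⟩
  have hBadcard : Bad.ncard = 4 := by
    have h1 : ((u, x) : V × V) ∉ ({(x, u), (x, y), (y, x)} : Set (V × V)) := by
      rintro (hb | hb | hb)
      · rw [Prod.mk.injEq] at hb; exact hux.ne hb.1
      · rw [Prod.mk.injEq] at hb; exact hux.ne hb.1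
      · simp only [Set.mem_singleton_iff] at hb
        rw [Prod.mk.injEq] at hb; exact huy.ne hb.1
    have h2 : ((x, u) : V × V) ∉ ({(x, y), (y, x)} : Set (V × V)) := by
      rintro (hb | hb)
      · rw [Prod.mk.injEq] at hb; exact huy.ne hb.2
      · simp only [Set.mem_singleton_iff] at hb
        rw [Prod.mk.injEq] at hb; exact hxy.ne hb.1
    have h3 : ((x, y) : V × V) ∉ ({(y, x)} : Set (V × V)) := by
      intro hb
      simp only [Set.mem_singleton_iff] at hb
      rw [Prod.mk.injEq] at hb; exact hxy.ne hb.1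
    rw [hBad, Set.ncard_insert_of_notMem h1, Set.ncard_insert_of_notMem h2,
      Set.ncard_insert_of_notMem h3, Set.ncard_singleton]
  have hmaps : ∀ p ∈ D, f p ∈ E2 G s \ Bad := by
    rintro p ⟨hA, hp1, hp2⟩
    obtain ⟨hne, hp1x, hp2x, hor⟩ := hA
    by_cases hadj : G.Adj p.1 p.2
    · rw [hfpos p hadj]
      refine ⟨⟨hadj, hp1.1, hp2.1⟩, ?_⟩
      rintro (hb | hb | hb | hb)
      · exact hp2x (by rw [hb])
      · exact hp1x (by rw [hb])
      · exact hp1x (by rw [hb])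
      · simp only [Set.mem_singleton_iff] at hb
        exact hp2x (by rw [hb])
    · rcases hor with hor | ⟨h1u, hx2⟩ | ⟨h2u, hx1⟩
      · exact absurd hor hadj
      · rw [hfneg1 p hadj h1u]
        refine ⟨⟨hx2, hxs, hp2.1⟩, ?_⟩
        rintro (hb | hb | hb | hb)
        · rw [Prod.mk.injEq] at hb; exact hux.ne hb.1.symm
        · rw [Prod.mk.injEq] at hb; exact hne (h1u.trans hb.2.symm)
        · rw [Prod.mk.injEq] at hb
          apply hadj; rw [h1u, hb.2]; exact huy
        · simp only [Set.mem_singleton_iff] at hb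
          rw [Prod.mk.injEq] at hb; exact hxy.ne hb.1
      · have h1u : p.1 ≠ u := fun h => hne (h.trans h2u.symm)
        rw [hfneg2 p hadj h1u]
        refine ⟨⟨hx1.symm, hp1.1, hxs⟩, ?_⟩
        rintro (hb | hb | hb | hb)
        · rw [Prod.mk.injEq] at hb; exact h1u hb.1
        · rw [Prod.mk.injEq] at hb; exact hux.ne hb.2.symm
        · rw [Prod.mk.injEq] at hb; exact hxy.ne hb.2
        · simp only [Set.mem_singleton_iff] at hb
          rw [Prod.mk.injEq] at hb
          apply hadj; rw [hb.1, h2u]; exact huy.symm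
  have hinj : Set.InjOn f D := by
    rintro p ⟨hAp, hpp1, hpp2⟩ q ⟨hAq, hqq1, hqq2⟩ heq
    obtain ⟨hnep, hp1x, hp2x, horp⟩ := hAp
    obtain ⟨hneq, hq1x, hq2x, horq⟩ := hAq
    by_cases hadjp : G.Adj p.1 p.2 <;> by_cases hadjq : G.Adj q.1 q.2
    · rwa [hfpos p hadjp, hfpos q hadjq] at heq
    · exfalso
      rw [hfpos p hadjp] at heq
      by_cases hq1u : q.1 = u
      · rw [hfneg1 q hadjq hq1u] at heq
        exact hp1x (by rw [heq])
      · rw [hfneg2 q hadjq hq1u] at heq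
        exact hp2x (by rw [heq])
    · exfalso
      rw [hfpos q hadjq] at heq
      by_cases hp1u : p.1 = u
      · rw [hfneg1 p hadjp hp1u] at heq
        exact hq1x (by rw [← heq])
      · rw [hfneg2 p hadjp hp1u] at heq
        exact hq2x (by rw [← heq])
    · by_cases hp1u : p.1 = u <;> by_cases hq1u : q.1 = u
      · rw [hfneg1 p hadjp hp1u, hfneg1 q hadjq hq1u, Prod.mk.injEq] at heq
        exact Prod.ext (hp1u.trans hq1u.symm) heq.2
      · exfalso
        rw [hfneg1 p hadjp hp1u, hfneg2 q hadjq hq1u, Prod.mk.injEq] at heq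
        exact hq1x heq.1.symm
      · exfalso
        rw [hfneg2 p hadjp hp1u, hfneg1 q hadjq hq1u, Prod.mk.injEq] at heq
        exact hp1x heq.1
      · rw [hfneg2 p hadjp hp1u, hfneg2 q hadjq hq1u, Prod.mk.injEq] at heq
        have hp2u : p.2 = u := by
          rcases horp with h | ⟨h, _⟩ | ⟨h, _⟩
          · exact absurd h hadjp
          · exact absurd h hp1u
          · exact h
        have hq2u : q.2 = u := by
          rcases horq with h | ⟨h, _⟩ | ⟨h, _⟩
          · exact absurd h hadjq
          · exact absurd h hq1u
          · exact h
        exact Prod.ext heq.1 (hp2u.trans hq2u.symm)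
  have himg : f '' D ⊆ E2 G s \ Bad := by
    rintro q ⟨p, hp, rfl⟩; exact hmaps p hp
  have h1 : D.ncard = (f '' D).ncard := (Set.ncard_image_of_injOn hinj).symm
  have h2 : (f '' D).ncard ≤ (E2 G s \ Bad).ncard :=
    Set.ncard_le_ncard himg (Set.toFinite _)
  have h3 : (E2 G s \ Bad).ncard + Bad.ncard = (E2 G s).ncard :=
    Set.ncard_diff_add_ncard_of_subset hBadsub (Set.toFinite _)
  omega

/-- Lifting `GoodIn` from a sub-region `s₀` to `s`. -/
lemma goodIn_lift {G : SimpleGraph V} {s s₀ : Set V} {u : V}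
    (hsub : s₀ ⊆ s)
    (hsep : ∀ p c, p ∈ s → p ∉ s₀ → c ∈ s₀ → c ≠ u → ¬ G.Adj u c → ¬ G.Adj p c)
    (hg : GoodIn G s₀ u) : GoodIn G s u := by
  obtain ⟨C, hCs, hCne, hCu, hCadj, hCind⟩ := hg
  refine ⟨C, hCs.trans hsub, hCne, hCu, hCadj, ?_⟩
  intro a b ha hb haC hbC hac hbc
  have has₀ : a ∈ s₀ := by
    by_contra han
    obtain ⟨c, hcC, hadj⟩ := hac
    exact hsep a c ha han (hCs hcC) (fun h => hCu (h ▸ hcC)) (hCadj c hcC) hadj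
  have hbs₀ : b ∈ s₀ := by
    by_contra hbn
    obtain ⟨c, hcC, hadj⟩ := hbc
    exact hsep b c hb hbn (hCs hcC) (fun h => hCu (h ▸ hcC)) (hCadj c hcC) hadj
  exact hCind a b has₀ hbs₀ haC hbC hac hbc

theorem main [Fintype V] :
    ∀ (n : ℕ) (G : SimpleGraph V) (s : Set V) (u : V),
      s.ncard = n → u ∈ s → ConnOn G (s \ {u}) →
      ((E2 G s).ncard : ℤ) ≤ 4 * (n : ℤ) - 8 → GoodIn G s u := by
  intro n
  induction n using Nat.strong_induction_on with
  | _ n IH =>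
  intro G s u hn hus hconn hcount
  classical
  have hnpos : 0 < n := hn ▸ ((Set.ncard_pos (Set.toFinite s)).mpr ⟨u, hus⟩)
  by_cases hNedge : ∃ x y, x ∈ s ∧ y ∈ s ∧ G.Adj u x ∧ G.Adj u y ∧ G.Adj x y
  · obtain ⟨x, y, hxs, hys, hux, huy, hxy⟩ := hNedge
    by_cases hc2 : ConnOn G ((s \ {u}) \ {x})
    · -- CONTRACTION CASE
      set G' := cg G u x with hG'
      have hns' : (s \ {x}).ncard = n - 1 := by
        rw [Set.ncard_diff_singleton_of_mem hxs, hn]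
      have hus' : u ∈ s \ {x} := ⟨hus, fun h => hux.ne (Set.mem_singleton_iff.mp h)⟩
      have hconn' : ConnOn G' ((s \ {x}) \ {u}) := by
        have hset : (s \ {x}) \ {u} = (s \ {u}) \ {x} := by
          rw [Set.diff_diff_comm]
        rw [hset]
        refine connOn_mono ?_ hc2
        intro a b ha hb hadj
        exact cg_adj.mpr ⟨hadj.ne, fun h => ha.2 (Set.mem_singleton_iff.mpr h),
          fun h => hb.2 (Set.mem_singleton_iff.mpr h), Or.inl hadj⟩
      have hcc := cg_count G hus hxs hys hux huy hxy
      rw [← hG'] at hcc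
      have hcount' : ((E2 G' (s \ {x})).ncard : ℤ) ≤ 4 * ((n - 1 : ℕ) : ℤ) - 8 := by
        omega
      obtain ⟨C, hCs', hCne, hCu, hCadj', hCind'⟩ :=
        IH (n - 1) (by omega) G' (s \ {x}) u hns' hus' hconn' hcount'
      have hkey : ∀ c ∈ C, ¬ G.Adj u c ∧ ¬ G.Adj x c := by
        intro c hcC
        have h1 : ¬ G'.Adj u c := hCadj' c hcC
        have hcx : c ≠ x := fun h => (hCs' hcC).2 (Set.mem_singleton_iff.mpr h)
        have hcu : c ≠ u := fun h => hCu (h ▸ hcC)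
        constructor
        · intro hadj
          exact h1 (cg_adj.mpr ⟨hcu.symm, hux.ne, hcx, Or.inl hadj⟩)
        · intro hadj
          exact h1 (cg_adj.mpr ⟨hcu.symm, hux.ne, hcx, Or.inr (Or.inl ⟨rfl, hadj⟩)⟩)
      refine ⟨C, (hCs'.trans Set.diff_subset), hCne, hCu,
        fun c hc => (hkey c hc).1, ?_⟩
      intro a b ha hb haC hbC hac hbc
      have hax : a ≠ x := by
        rintro rfl; obtain ⟨c, hcC, hadj⟩ := hac; exact (hkey c hcC).2 hadj
      have hbx : b ≠ x := by
        rintro rfl; obtain ⟨c, hcC, hadj⟩ := hbc; exact (hkey c hcC).2 hadj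
      have hwa : ∃ c ∈ C, G'.Adj a c := by
        obtain ⟨c, hcC, hadj⟩ := hac
        exact ⟨c, hcC, cg_adj.mpr ⟨hadj.ne, hax,
          fun h => (hCs' hcC).2 (Set.mem_singleton_iff.mpr h), Or.inl hadj⟩⟩
      have hwb : ∃ c ∈ C, G'.Adj b c := by
        obtain ⟨c, hcC, hadj⟩ := hbc
        exact ⟨c, hcC, cg_adj.mpr ⟨hadj.ne, hbx,
          fun h => (hCs' hcC).2 (Set.mem_singleton_iff.mpr h), Or.inl hadj⟩⟩
      intro hadj
      exact hCind' a b ⟨ha, fun h => hax (Set.mem_singleton_iff.mp h)⟩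
        ⟨hb, fun h => hbx (Set.mem_singleton_iff.mp h)⟩ haC hbC hwa hwb
        (cg_adj.mpr ⟨hadj.ne, hax, hbx, Or.inl hadj⟩)
    · -- SPLIT CASE
      set t := (s \ {u}) \ {x} with ht
      have hyt : y ∈ t := ⟨⟨hys, fun h => huy.ne' (Set.mem_singleton_iff.mp h)⟩,
        fun h => hxy.ne' (Set.mem_singleton_iff.mp h)⟩
      have hext : ∃ a b, a ∈ t ∧ b ∈ t ∧ ¬ ReachIn G t a b := by
        by_contra hcon
        push_neg at hcon
        exact hc2 ⟨⟨y, hyt⟩, fun a ha b hb => hcon a b ha hb⟩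
      obtain ⟨a₀, b₀, ha₀, hb₀, hnr⟩ := hext
      set B := {v | v ∈ t ∧ ReachIn G t a₀ v} with hB
      have haB : a₀ ∈ B := ⟨ha₀, Relation.ReflTransGen.refl⟩
      have hbB : b₀ ∉ B := fun h => hnr h.2
      have hBt : B ⊆ t := fun v hv => hv.1
      have hBs : B ⊆ s := fun v hv => (hBt hv).1.1
      have hsep : ∀ p q, p ∈ B → q ∈ t → q ∉ B → ¬ G.Adj p q := by
        intro p q hp hq hqB hadj
        exact hqB ⟨hq, hp.2.tail ⟨hadj, hp.1, hq⟩⟩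
      have huB : u ∉ B := fun h => (hBt h).1.2 rfl
      have hxB : x ∉ B := fun h => (hBt h).2 rfl
      have hclose : ∀ p q, p ∈ B → q ∈ s → G.Adj p q → q ∈ B ∨ q = u ∨ q = x := by
        intro p q hp hq hadj
        by_cases hqu : q = u
        · exact Or.inr (Or.inl hqu)
        by_cases hqx : q = x
        · exact Or.inr (Or.inr hqx)
        left
        have hqt : q ∈ t := ⟨⟨hq, fun h => hqu (Set.mem_singleton_iff.mp h)⟩,
          fun h => hqx (Set.mem_singleton_iff.mp h)⟩
        by_contra hqB
        exact hsep p q hp hqt hqB hadj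
      set Tch := {p : V × V | p ∈ E2 G s ∧ (p.1 ∈ B ∨ p.2 ∈ B)} with hTch
      have hTsub : Tch ⊆ E2 G s := fun p hp => hp.1
      have hid1 : E2 G (s \ B) = E2 G s \ Tch := by
        ext p
        simp only [E2, Set.mem_setOf_eq, Set.mem_diff, hTch]
        constructor
        · rintro ⟨hadj, ⟨h1s, h1B⟩, h2s, h2B⟩
          refine ⟨⟨hadj, h1s, h2s⟩, ?_⟩
          rintro ⟨-, hc | hc⟩
          exacts [h1B hc, h2B hc]
        · rintro ⟨⟨hadj, h1s, h2s⟩, hne⟩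
          refine ⟨hadj, ⟨h1s, fun hc => hne ⟨⟨hadj, h1s, h2s⟩, Or.inl hc⟩⟩,
            h2s, fun hc => hne ⟨⟨hadj, h1s, h2s⟩, Or.inr hc⟩⟩
      set s₂ : Set V := B ∪ {u, x} with hs₂
      have hs₂s : s₂ ⊆ s := by
        rintro v (hv | hv | hv)
        · exact hBs hv
        · exact hv ▸ hus
        · exact (Set.mem_singleton_iff.mp hv) ▸ hxs
      have hid2 : E2 G s₂ = Tch ∪ {((u, x) : V × V), (x, u)} := by
        ext p
        constructor
        · rintro ⟨hadj, h1, h2⟩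
          by_cases h1B : p.1 ∈ B
          · exact Or.inl ⟨⟨hadj, hs₂s h1, hs₂s h2⟩, Or.inl h1B⟩
          by_cases h2B : p.2 ∈ B
          · exact Or.inl ⟨⟨hadj, hs₂s h1, hs₂s h2⟩, Or.inr h2B⟩
          · -- both in {u, x}
            have h1' : p.1 = u ∨ p.1 = x := by
              rcases h1 with h | h | h
              · exact absurd h h1B
              · exact Or.inl h
              · exact Or.inr (Set.mem_singleton_iff.mp h)
            have h2' : p.2 = u ∨ p.2 = x := by
              rcases h2 with h | h | h
              · exact absurd h h2B
              · exact Or.inl h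
              · exact Or.inr (Set.mem_singleton_iff.mp h)
            right
            rcases h1' with h1' | h1' <;> rcases h2' with h2' | h2'
            · exact absurd (h1'.trans h2'.symm) hadj.ne
            · exact Or.inl (Prod.ext h1' h2')
            · exact Or.inr (Set.mem_singleton_iff.mpr (Prod.ext h1' h2'))
            · exact absurd (h1'.trans h2'.symm) hadj.ne
        · rintro (⟨⟨hadj, h1s, h2s⟩, hor⟩ | hp | hp)
          · refine ⟨hadj, ?_, ?_⟩
            · rcases hor with h | h
              · exact Or.inl h
              · rcases hclose p.2 p.1 h h1s hadj.symm with hh | hh | hh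
                · exact Or.inl hh
                · exact Or.inr (Or.inl hh)
                · exact Or.inr (Or.inr (Set.mem_singleton_iff.mpr hh))
            · rcases hor with h | h
              · rcases hclose p.1 p.2 h h2s hadj with hh | hh | hh
                · exact Or.inl hh
                · exact Or.inr (Or.inl hh)
                · exact Or.inr (Or.inr (Set.mem_singleton_iff.mpr hh))
              · exact Or.inl h
          · rw [hp]
            exact ⟨hux, Or.inr (Or.inl rfl), Or.inr (Or.inr rfl)⟩
          · rw [Set.mem_singleton_iff.mp hp]
            exact ⟨hux.symm, Or.inr (Or.inr rfl), Or.inr (Or.inl rfl)⟩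
      have hTeven : Even Tch.ncard := by
        refine even_ncard_symmPairs Tch ?_ ?_
        · rintro p ⟨⟨hadj, h1, h2⟩, hor⟩
          exact ⟨⟨hadj.symm, h2, h1⟩, hor.symm⟩
        · rintro p ⟨⟨hadj, -, -⟩, -⟩
          exact hadj.ne
      have hkey1 : (E2 G (s \ B)).ncard + Tch.ncard = (E2 G s).ncard := by
        rw [hid1]
        exact Set.ncard_diff_add_ncard_of_subset hTsub (Set.toFinite _)
      have huxTch : ((u, x) : V × V) ∉ Tch := by
        rintro ⟨-, h | h⟩
        · exact huB h
        · exact hxB h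
      have hxuTch : ((x, u) : V × V) ∉ Tch := by
        rintro ⟨-, h | h⟩
        · exact hxB h
        · exact huB h
      have hpairne : ((u, x) : V × V) ≠ (x, u) := by
        intro h; rw [Prod.mk.injEq] at h; exact hux.ne h.1
      have hkey2 : (E2 G s₂).ncard = Tch.ncard + 2 := by
        rw [hid2, Set.ncard_union_eq ?_ (Set.toFinite _) (Set.toFinite _),
          Set.ncard_pair hpairne]
        rw [Set.disjoint_right]
        rintro p (hp | hp)
        · rw [hp]; exact huxTch
        · rw [Set.mem_singleton_iff.mp hp]; exact hxuTch
      have hBpos : 0 < B.ncard := (Set.ncard_pos (Set.toFinite B)).mpr ⟨a₀, haB⟩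
      have hBn : (s \ B).ncard + B.ncard = n := by
        rw [← hn]; exact Set.ncard_diff_add_ncard_of_subset hBs (Set.toFinite _)
      by_cases hT4 : 4 * B.ncard ≤ Tch.ncard
      · -- CASE I : recurse on s \ B
        have hsB : u ∈ s \ B := ⟨hus, huB⟩
        have hconn₁ : ConnOn G ((s \ B) \ {u}) := by
          have hset : (s \ B) \ {u} = (s \ {u}) \ B := by rw [Set.diff_diff_comm]
          rw [hset]
          refine connOn_diff hconn ⟨hxs, fun h => hux.ne (Set.mem_singleton_iff.mp h).symm⟩ hxB ?_
          intro p q hp hq hqB hqx hadj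
          exact hsep p q hp ⟨hq, fun h => hqx (Set.mem_singleton_iff.mp h)⟩ hqB hadj
        have hcount₁ : ((E2 G (s \ B)).ncard : ℤ) ≤ 4 * (((s \ B).ncard : ℕ) : ℤ) - 8 := by
          omega
        have hlt₁ : (s \ B).ncard < n := by omega
        have hg₁ := IH ((s \ B).ncard) hlt₁ G (s \ B) u rfl hsB hconn₁ hcount₁
        refine goodIn_lift Set.diff_subset ?_ hg₁
        intro p c hps hpB hcs hcu hcadj hadj
        have hpB' : p ∈ B := by
          by_contra hpn
          exact hpB ⟨hps, hpn⟩
        have hcx : c ≠ x := fun h => hcadj (h ▸ hux)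
        have hct : c ∈ t := ⟨⟨hcs.1, fun h => hcu (Set.mem_singleton_iff.mp h)⟩,
          fun h => hcx (Set.mem_singleton_iff.mp h)⟩
        exact hsep p c hpB' hct hcs.2 hadj
      · -- CASE II : recurse on s₂ = B ∪ {u, x}
        push_neg at hT4
        have hus₂ : u ∈ s₂ := Or.inr (Or.inl rfl)
        have hn₂ : s₂.ncard = B.ncard + 2 := by
          rw [hs₂, Set.ncard_union_eq ?_ (Set.toFinite _) (Set.toFinite _),
            Set.ncard_pair hux.ne]
          rw [Set.disjoint_right]
          rintro v (hv | hv)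
          · exact hv ▸ huB
          · exact (Set.mem_singleton_iff.mp hv) ▸ hxB
        have hb₀s₂ : b₀ ∉ s₂ := by
          rintro (h | h | h)
          · exact hbB h
          · exact ((hb₀.1.2) (Set.mem_singleton_iff.mpr h))
          · exact ((hb₀.2) h)
        have hlt₂ : s₂.ncard < n := by
          have hsub2 : s₂ ⊆ s \ {b₀} :=
            fun v hv => ⟨hs₂s hv, fun h => hb₀s₂ ((Set.mem_singleton_iff.mp h) ▸ hv)⟩
          have h1 := Set.ncard_le_ncard hsub2 (Set.toFinite _)
          have h2 : (s \ {b₀}).ncard = n - 1 := by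
            rw [Set.ncard_diff_singleton_of_mem hb₀.1.1, hn]
          omega
        have hconn₂ : ConnOn G (s₂ \ {u}) := by
          have hset : s₂ \ {u} = (s \ {u}) \ (t \ B) := by
            ext v
            simp only [hs₂, ht, Set.mem_diff, Set.mem_union, Set.mem_insert_iff,
              Set.mem_singleton_iff]
            constructor
            · rintro ⟨hv | hv | hv, hvu⟩
              · exact ⟨⟨hBs hv, hvu⟩, fun hc => hc.2 hv⟩
              · exact absurd hv hvu
              · exact ⟨⟨hv ▸ hxs, hvu⟩, fun hc => hc.1.2 hv⟩
            · rintro ⟨⟨hvs, hvu⟩, hc⟩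
              by_cases hvx : v = x
              · exact ⟨Or.inr (Or.inr hvx), hvu⟩
              · refine ⟨Or.inl ?_, hvu⟩
                by_contra hvB
                exact hc ⟨⟨⟨hvs, hvu⟩, hvx⟩, hvB⟩
          rw [hset]
          refine connOn_diff hconn ⟨hxs, fun h => hux.ne (Set.mem_singleton_iff.mp h).symm⟩
            (fun h => h.1.2 rfl) ?_
          intro p q hp hq hqA hqx hadj
          have hqB : q ∈ B := by
            by_contra hqB
            exact hqA ⟨⟨hq, fun h => hqx (Set.mem_singleton_iff.mp h)⟩, hqB⟩
          exact hsep q p hqB hp.1 hp.2 hadj.symm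
        have hcount₂ : ((E2 G s₂).ncard : ℤ) ≤ 4 * ((s₂.ncard : ℕ) : ℤ) - 8 := by
          obtain ⟨k, hk⟩ := hTeven
          omega
        have hg₂ := IH (s₂.ncard) hlt₂ G s₂ u rfl hus₂ hconn₂ hcount₂
        refine goodIn_lift hs₂s ?_ hg₂
        intro p c hps hps₂ hcs₂ hcu hcadj hadj
        have hcx : c ≠ x := fun h => hcadj (h ▸ hux)
        have hcB : c ∈ B := by
          rcases hcs₂ with h | h | h
          · exact h
          · exact absurd h hcu
          · exact absurd (Set.mem_singleton_iff.mp h) hcx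
        have hpt : p ∈ t \ B := by
          constructor
          · refine ⟨⟨hps, fun h => hps₂ (Or.inr (Or.inl (Set.mem_singleton_iff.mp h)))⟩,
              fun h => hps₂ (Or.inr (Or.inr h))⟩
          · exact fun h => hps₂ (Or.inl h)
        exact hsep c p hcB hpt.1 hpt.2 hadj.symm
  · -- N(u) ∩ s INDEPENDENT
    push_neg at hNedge
    set W := {v | v ∈ s ∧ v ≠ u ∧ ¬ G.Adj u v} with hW
    by_cases hWne : W.Nonempty
    · obtain ⟨w₀, hw₀⟩ := hWne
      set C := {v | v ∈ W ∧ ReachIn G W w₀ v} with hC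
      refine ⟨C, fun v hv => hv.1.1, ⟨w₀, hw₀, Relation.ReflTransGen.refl⟩,
        fun h => h.1.2.1 rfl, fun c hc => hc.1.2.2, ?_⟩
      intro a b ha hb haC hbC hac hbc
      have hkey : ∀ z, z ∈ s → z ∉ C → (∃ c ∈ C, G.Adj z c) → G.Adj u z := by
        rintro z hz hzC ⟨c, hcC, hadj⟩
        have hzu : z ≠ u := by
          rintro rfl; exact hcC.1.2.2 hadj
        by_contra hzadj
        have hzW : z ∈ W := ⟨hz, hzu, hzadj⟩
        exact hzC ⟨hzW, hcC.2.tail ⟨hadj.symm, hcC.1, hzW⟩⟩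
      exact hNedge a b ha hb (hkey a ha haC hac) (hkey b hb hbC hbc)
    · exfalso
      have hdom : ∀ v ∈ s, v = u ∨ G.Adj u v := by
        intro v hv
        by_contra hcon
        push_neg at hcon
        exact hWne ⟨v, hv, hcon.1, hcon.2⟩
      obtain ⟨⟨x₀, hx₀⟩, hreach⟩ := hconn
      have hx₀s : x₀ ∈ s := hx₀.1
      have hx₀u : x₀ ≠ u := fun h => hx₀.2 (Set.mem_singleton_iff.mpr h)
      have hux₀ : G.Adj u x₀ := (hdom x₀ hx₀s).resolve_left hx₀u
      by_cases hz : ∃ z, z ∈ s ∧ z ≠ u ∧ z ≠ x₀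
      · obtain ⟨z, hzs, hzu, hzx⟩ := hz
        have hr := hreach x₀ ⟨hx₀s, fun h => hx₀u (Set.mem_singleton_iff.mp h)⟩
          z ⟨hzs, fun h => hzu (Set.mem_singleton_iff.mp h)⟩
        rcases Relation.ReflTransGen.cases_head hr with heq | ⟨c, hstep, -⟩
        · exact hzx heq.symm
        · obtain ⟨hadj, h1, h2⟩ := hstep
          have hcs : c ∈ s := h2.1
          have hcu : c ≠ u := fun h => h2.2 (Set.mem_singleton_iff.mpr h)
          exact hNedge x₀ c hx₀s hcs hux₀ ((hdom c hcs).resolve_left hcu) hadj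
      · push_neg at hz
        have hsub : s ⊆ {u, x₀} := by
          intro v hv
          by_cases h : v = u
          · exact Or.inl h
          · exact Or.inr (Set.mem_singleton_iff.mpr (hz v hv h))
        have hn2 : n ≤ 2 := by
          rw [← hn]
          refine le_trans (Set.ncard_le_ncard hsub (Set.toFinite _)) ?_
          rw [Set.ncard_pair hx₀u.symm]
        have hpairsub : ({((u, x₀) : V × V), (x₀, u)} : Set (V × V)) ⊆ E2 G s := by
          rintro p (hp | hp)
          · rw [hp]; exact ⟨hux₀, hus, hx₀s⟩
          · rw [Set.mem_singleton_iff.mp hp]; exact ⟨hux₀.symm, hx₀s, hus⟩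
        have h2le : 2 ≤ (E2 G s).ncard := by
          have hle := Set.ncard_le_ncard hpairsub (Set.toFinite _)
          have hpne : ((u, x₀) : V × V) ≠ (x₀, u) := by
            intro h; rw [Prod.mk.injEq] at h; exact hux₀.ne h.1
          rw [Set.ncard_pair hpne] at hle
          exact hle
        omega

/-- Walks in an induced subgraph give relativized reachability. -/
lemma walk_reachIn {G : SimpleGraph V} {t : Set V} :
    ∀ {a b : ↥t}, (G.induce t).Walk a b → ReachIn G t ↑a ↑b := by
  intro a b w
  induction w with
  | nil => exact Relation.ReflTransGen.refl
  | cons h p ih =>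
    rename_i x y z
    have hadj : G.Adj ↑x ↑y := by simpa using h
    exact Relation.ReflTransGen.head ⟨hadj, x.2, y.2⟩ ih

lemma connOn_of_connected_induce {G : SimpleGraph V} {t : Set V}
    (h : (G.induce t).Connected) : ConnOn G t := by
  refine ⟨?_, ?_⟩
  · obtain ⟨⟨v, hv⟩⟩ := h.nonempty
    exact ⟨v, hv⟩
  · intro a ha b hb
    obtain ⟨w⟩ := h.preconnected ⟨a, ha⟩ ⟨b, hb⟩
    exact walk_reachIn w

/-- Walks in `G - S` starting in `C` stay in `C`, where `S ⊇ N(C) \ C`. -/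
lemma walk_stay {G : SimpleGraph V} {S C : Set V}
    (hSdef : ∀ v, v ∉ C → (∃ c ∈ C, G.Adj v c) → v ∈ S) :
    ∀ {a b : ↥(Sᶜ)}, (G.induce Sᶜ).Walk a b → ↑a ∈ C → ↑b ∈ C := by
  intro a b w
  induction w with
  | nil => exact id
  | cons h p ih =>
    rename_i x y z
    intro hxC
    apply ih
    by_contra hyC
    have hadj : G.Adj ↑x ↑y := by simpa using h
    exact y.2 (hSdef ↑y hyC ⟨↑x, hxC, hadj.symm⟩)

/-- The ordered edge count over the whole vertex set is twice the edge count. -/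
lemma e2_univ_ncard [Fintype V] (G : SimpleGraph V) :
    (E2 G (Set.univ : Set V)).ncard = 2 * G.edgeSet.ncard := by
  classical
  have he : (E2 G Set.univ).ncard = Nat.card G.Dart := by
    rw [← Nat.card_coe_set_eq]
    refine (Nat.card_congr ?_).symm
    refine ⟨fun d => ⟨d.toProd, d.adj, trivial, trivial⟩,
      fun p => ⟨p.1, p.2.1⟩, fun d => rfl, fun p => rfl⟩
  rw [he, Nat.card_eq_fintype_card, SimpleGraph.dart_card_eq_twice_card_edges,
    Set.ncard_eq_toFinset_card' G.edgeSet]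
  rfl

end IndepCutAux

/-- If `G` is a `2`-connected graph of order `n` with fewer than `2n - 3` edges, then,
for every vertex `u` of `G`, there is an independent cut `S` of `G` with `u ∉ S`. -/
theorem two_connected_sparse_graph_has_independent_cut_avoiding_vertex
    {V : Type*} [Fintype V] (G : SimpleGraph V) [Fintype G.edgeSet]
    (h2 : KConnected 2 G)
    (h : (G.edgeFinset.card : ℤ) < 2 * Fintype.card V - 3) (u : V) :
    ∃ S : Set V, IsIndependentCut G S ∧ u ∉ S := by
  classical
  obtain ⟨hcard, hdel⟩ := h2
  have hc0 : (G.induce ((↑({u} : Finset V) : Set V))ᶜ).Connected :=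
    hdel {u} (by simp)
  have hc1 : IndepCutAux.ConnOn G ((↑({u} : Finset V) : Set V))ᶜ :=
    IndepCutAux.connOn_of_connected_induce hc0
  have hseteq : ((↑({u} : Finset V) : Set V))ᶜ = Set.univ \ {u} := by
    simp [Set.compl_eq_univ_diff]
  rw [hseteq] at hc1
  have hedge : G.edgeSet.ncard = G.edgeFinset.card := by
    rw [Set.ncard_eq_toFinset_card' G.edgeSet]
    rfl
  have hcount : ((IndepCutAux.E2 G (Set.univ : Set V)).ncard : ℤ) ≤
      4 * (((Set.univ : Set V).ncard : ℕ) : ℤ) - 8 := by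
    rw [IndepCutAux.e2_univ_ncard, Set.ncard_univ, Nat.card_eq_fintype_card]
    push_cast
    omega
  obtain ⟨C, hCs, ⟨c₀, hc₀⟩, hCu, hCadj, hCind⟩ :=
    IndepCutAux.main ((Set.univ : Set V).ncard) G Set.univ u rfl (Set.mem_univ u) hc1 hcount
  set S : Set V := {p | p ∉ C ∧ ∃ c ∈ C, G.Adj p c} with hS
  have huS : u ∉ S := by
    rintro ⟨-, c, hcC, hadj⟩
    exact hCadj c hcC hadj
  have hc₀S : c₀ ∉ S := fun hh => hh.1 hc₀
  refine ⟨S, ⟨⟨⟨c₀, hc₀S⟩, ⟨u, huS⟩, ?_⟩, ?_⟩, huS⟩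
  · rintro ⟨w⟩
    exact hCu (IndepCutAux.walk_stay (G := G) (S := S) (C := C) (fun v hv hex => ⟨hv, hex⟩) w hc₀)
  · intro a ha b hb
    exact hCind a b (Set.mem_univ a) (Set.mem_univ b) ha.1 hb.1 ha.2 hb.2
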